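/- Let v₁ = (0,0,0), v₂ = (1000,0,0), v₃ = (375,781,0), v₄ = (−31,220,722), v₅ = (53,−46,−239), v₆ = (146,626,496), v₇ = (837,−97,517), v₈ = (21,311,109), v₉ = (835,−174,−208), v₁₀ = (650,749,129) in ℝ³, and define edge vectors eᵢ = v_{i+1} − vᵢ for i = 1, …, 9 and e₁₀ = v₁ − v₁₀. Then there is no w ∈ ℝ³ such that (−1)^{i+1} (w · eᵢ) > 0 for every i ∈ {1, …, 10}. -/

import Mathlib

/-- The vertices of the paper's 10-stick polygonal realization of the knot `8_15`.
Here `vert8_15 i` is the paper's vertex `v_(i+1)`. -/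
noncomputable def vert8_15 : Fin 10 → (Fin 3 → ℝ) :=
  ![![0, 0, 0], ![1000, 0, 0], ![375, 781, 0], ![-31, 220, 722], ![53, -46, -239], ![146, 626, 496], ![837, -97, 517], ![21, 311, 109], ![835, -174, -208], ![650, 749, 129]]

/-- The edge vectors `eᵢ = v_(i+1) − vᵢ` (cyclically, so `e₁₀ = v₁ − v₁₀`);
here `edge8_15 i` is the paper's `e_(i+1)`, using wrap-around addition on `Fin 10`. -/
noncomputable def edge8_15 (i : Fin 10) : Fin 3 → ℝ :=
  vert8_15 (i + 1) - vert8_15 i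

/-- There is no `w ∈ ℝ³` such that `(−1)^(i+1) (w · eᵢ) > 0` for every
`i ∈ {1, …, 10}`: no projection of this polygon (the knot `8_15`) to a line has
5 local maxima. (With 0-based indexing `i : Fin 10`, the sign is `(−1)^i`.) -/
theorem no_alternating_direction_8_15 :
    ¬ ∃ w : Fin 3 → ℝ, ∀ i : Fin 10,
        0 < (-1 : ℝ) ^ (i : ℕ) * ∑ j : Fin 3, w j * edge8_15 i j := by
  rintro ⟨w, h⟩
  have h0 := h 0
  have h1 := h 1
  have h2 := h 2
  have h5 := h 5
  have e0 : edge8_15 0 = ![1000, 0, 0] - ![0, 0, 0] := rfl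
  have e1 : edge8_15 1 = ![375, 781, 0] - ![1000, 0, 0] := rfl
  have e2 : edge8_15 2 = ![-31, 220, 722] - ![375, 781, 0] := rfl
  have e5 : edge8_15 5 = ![837, -97, 517] - ![146, 626, 496] := rfl
  rw [e0] at h0
  rw [e1] at h1
  rw [e2] at h2
  rw [e5] at h5
  norm_num [Fin.sum_univ_three, Matrix.cons_val_two, show ((5 : Fin 10) : ℕ) = 5 from rfl] at h0 h1 h2 h5
  linarith
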